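/- Let r = p^ν, let K be a field containing F_q and an element s transcendental over F_q, set t := s^r, and let L be a separably closed field extension of K. Then for every nonzero polynomial a ∈ F_q[X], the r-th power map λ ↦ λ^r is a bijection from the kernel {λ ∈ L : D_s(â)(λ) = 0} onto the kernel {δ ∈ L : D_t(a)(δ) = 0}. -/

import Mathlib

open Polynomial

section Aux

variable {Fq L : Type} [Field Fq] [Field L] [Algebra Fq L]

/-- Iterated composition of the additive polynomial `u • X + X ^ q`. -/
noncomputable def Giter (u : L) (q : ℕ) : ℕ → Polynomial L
  | 0 => X
  | (k + 1) => (Giter u q k).comp (C u * X + X ^ q)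

lemma Giter_eval (u : L) (q : ℕ) (k : ℕ) (x : L) :
    (Giter u q k).eval x = (fun y : L => u * y + y ^ q)^[k] x := by
  induction k generalizing x with
  | zero => simp [Giter]
  | succ k ih =>
      rw [Giter, eval_comp, Function.iterate_succ_apply]
      simp [ih]

lemma G_degree_lt (u : L) {q : ℕ} (hq : 2 ≤ q) :
    (C u * X : L[X]).degree < (X ^ q : L[X]).degree := by
  have h1 : (C u * X : L[X]).degree ≤ 1 := by
    calc (C u * X : L[X]).degree ≤ (C u : L[X]).degree + (X : L[X]).degree := degree_mul_le _ _
    _ ≤ 0 + 1 := add_le_add degree_C_le (le_of_eq degree_X)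
    _ = 1 := by simp
  refine lt_of_le_of_lt h1 ?_
  rw [degree_X_pow]
  exact_mod_cast (by omega : (1 : ℕ) < q)

lemma G_monic (u : L) {q : ℕ} (hq : 2 ≤ q) : (C u * X + X ^ q : L[X]).Monic :=
  Monic.add_of_right (monic_X_pow q) (G_degree_lt u hq)

lemma G_natDegree (u : L) {q : ℕ} (hq : 2 ≤ q) : (C u * X + X ^ q : L[X]).natDegree = q := by
  have h2 : (C u * X + X ^ q : L[X]).degree = q := by
    rw [degree_add_eq_right_of_degree_lt (G_degree_lt u hq), degree_X_pow]
  exact natDegree_eq_of_degree_eq_some h2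

lemma Giter_monic (u : L) {q : ℕ} (hq : 2 ≤ q) (k : ℕ) : (Giter u q k).Monic := by
  induction k with
  | zero => exact monic_X
  | succ k ih =>
      rw [Giter]
      exact ih.comp (G_monic u hq) (by rw [G_natDegree u hq]; omega)

lemma Giter_natDegree (u : L) {q : ℕ} (hq : 2 ≤ q) (k : ℕ) :
    (Giter u q k).natDegree = q ^ k := by
  induction k with
  | zero => simp [Giter]
  | succ k ih =>
      rw [Giter, natDegree_comp, ih, G_natDegree u hq, pow_succ]

lemma Giter_derivative (u : L) {q : ℕ} (hqL : (q : L) = 0) (k : ℕ) :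
    derivative (Giter u q k) = C (u ^ k) := by
  induction k with
  | zero => simp [Giter]
  | succ k ih =>
      rw [Giter, derivative_comp, ih]
      have hG : derivative (C u * X + X ^ q : L[X]) = C u := by
        rw [derivative_add, derivative_mul, derivative_C, derivative_X, derivative_X_pow, hqL]
        simp
      rw [hG, C_comp, ← C_mul, mul_comm, ← pow_succ]

/-- The ordinary polynomial over `L` representing the additive operator `D b`. -/
noncomputable def Fb (u : L) (q : ℕ) (b : Polynomial Fq) : L[X] :=
  ∑ k ∈ b.support, C (algebraMap Fq L (b.coeff k)) * Giter u q k

lemma Fb_eval (u : L) (q : ℕ) (D : Polynomial Fq →ₐ[Fq] Module.End Fq L)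
    (hD : ∀ x : L, D X x = u * x + x ^ q) (b : Polynomial Fq) (x : L) :
    D b x = (Fb u q b).eval x := by
  have h1 : D = aeval (D X) := algHom_ext (by rw [aeval_X])
  have hcoe : ⇑(D X) = fun y : L => u * y + y ^ q := funext hD
  rw [Fb, eval_finset_sum]
  conv_lhs => rw [h1, b.as_sum_support, map_sum]
  rw [LinearMap.sum_apply]
  refine Finset.sum_congr rfl fun k _ => ?_
  rw [aeval_monomial, Module.End.mul_apply, Module.algebraMap_end_apply, Module.End.pow_apply,
    hcoe, eval_mul, eval_C, Giter_eval, Algebra.smul_def]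

lemma Fb_derivative (u : L) {q : ℕ} (hqL : (q : L) = 0) (b : Polynomial Fq) :
    derivative (Fb u q b) = C (aeval u b) := by
  conv_rhs => rw [b.as_sum_support, map_sum, map_sum]
  rw [Fb, derivative_sum]
  refine Finset.sum_congr rfl fun k _ => ?_
  rw [derivative_mul, derivative_C, zero_mul, zero_add, Giter_derivative u hqL,
    aeval_monomial, C_mul]

lemma Fb_degree {q : ℕ} (hq : 2 ≤ q) (u : L) {b : Polynomial Fq} (hb : b ≠ 0) :
    (Fb u q b).degree = ((q ^ b.natDegree : ℕ) : WithBot ℕ) := by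
  have hn : b.natDegree ∈ b.support := natDegree_mem_support_of_nonzero hb
  have hcoeff : ∀ k ∈ b.support, (algebraMap Fq L (b.coeff k)) ≠ 0 := by
    intro k hk
    simpa using mem_support_iff.mp hk
  have hGd : ∀ k, (Giter u q k).degree = ((q ^ k : ℕ) : WithBot ℕ) := fun k => by
    rw [degree_eq_natDegree (Giter_monic u hq k).ne_zero, Giter_natDegree u hq]
  have h1 : (C (algebraMap Fq L (b.coeff b.natDegree)) * Giter u q b.natDegree).degree
      = ((q ^ b.natDegree : ℕ) : WithBot ℕ) := by
    rw [degree_C_mul (hcoeff _ hn), hGd]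
  have h2 : (∑ k ∈ b.support.erase b.natDegree,
      C (algebraMap Fq L (b.coeff k)) * Giter u q k).degree
      < ((q ^ b.natDegree : ℕ) : WithBot ℕ) := by
    refine lt_of_le_of_lt (degree_sum_le _ _) ?_
    rw [Finset.sup_lt_iff (by exact_mod_cast WithBot.bot_lt_coe (q ^ b.natDegree))]
    intro k hk
    have hkn : k < b.natDegree :=
      lt_of_le_of_ne (le_natDegree_of_mem_supp k (Finset.mem_of_mem_erase hk))
        (Finset.ne_of_mem_erase hk)
    rw [degree_C_mul (hcoeff _ (Finset.mem_of_mem_erase hk)), hGd]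
    exact_mod_cast Nat.pow_lt_pow_right (by omega) hkn
  rw [Fb, ← Finset.add_sum_erase _ _ hn,
    degree_add_eq_left_of_degree_lt (by rw [h1]; exact h2), h1]

lemma ker_finset {q : ℕ} [IsSepClosed L] (hq : 2 ≤ q) (hqL : (q : L) = 0) (u : L)
    {b : Polynomial Fq} (hb : b ≠ 0) (hu : aeval u b ≠ 0)
    (D : Polynomial Fq →ₐ[Fq] Module.End Fq L) (hD : ∀ x : L, D X x = u * x + x ^ q) :
    ∃ S : Finset L, (↑S = {x : L | D b x = 0}) ∧ S.card = q ^ b.natDegree := by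
  classical
  have hdeg := Fb_degree hq u hb
  have hF0 : Fb u q b ≠ 0 := by
    intro h
    rw [h, degree_zero] at hdeg
    exact (WithBot.bot_ne_coe (a := q ^ b.natDegree)) (by exact_mod_cast hdeg)
  have hsep : (Fb u q b).Separable := by
    refine ⟨0, C (aeval u b)⁻¹, ?_⟩
    rw [Fb_derivative u hqL, zero_mul, zero_add, ← C_mul, inv_mul_cancel₀ hu, C_1]
  have hsplits : (Fb u q b).Splits :=
    IsSepClosed.splits_of_separable _ hsep
  refine ⟨(Fb u q b).roots.toFinset, ?_, ?_⟩
  · ext x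
    simp only [Finset.mem_coe, Multiset.mem_toFinset, mem_roots hF0, Set.mem_setOf_eq, IsRoot.def]
    rw [Fb_eval u q D hD b x]
  · rw [Multiset.toFinset_card_of_nodup (nodup_roots hsep), splits_iff_card_roots.mp hsplits,
      natDegree_eq_of_degree_eq_some hdeg]

end Aux

/-- Let `r = p^ν`, `K` a field containing `F_q` and an element `s`
transcendental over `F_q`, `t := s^r`, and `L` a separably closed field extension of `K`.
Then for every nonzero `a ∈ F_q[X]`, the `r`-th power map is a bijection from
`{λ ∈ L : D_s(â)(λ) = 0}` onto `{δ ∈ L : D_t(a)(δ) = 0}`. -/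
theorem carlitz_twist_torsion_pow_bijOn
    (p m ν : ℕ) (hp : p.Prime) (hm : 0 < m)
    (Fq : Type) [Field Fq] [Fintype Fq] (hq : Fintype.card Fq = p ^ m)
    (K : Type) [Field K] [Algebra Fq K] (s : K) (hs : Transcendental Fq s)
    (L : Type) [Field L] [Algebra Fq L] [Algebra K L] [IsScalarTower Fq K L]
    [IsSepClosed L]
    (Dt Ds : Polynomial Fq →ₐ[Fq] Module.End Fq L)
    (hDt : ∀ x : L,
      Dt Polynomial.X x = algebraMap K L (s ^ p ^ ν) * x + x ^ Fintype.card Fq)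
    (hDs : ∀ x : L,
      Ds Polynomial.X x = algebraMap K L s * x + x ^ Fintype.card Fq)
    (hat : Polynomial Fq → Polynomial Fq)
    (hhat : ∀ (a : Polynomial Fq) (k : ℕ), (hat a).coeff k ^ p ^ ν = a.coeff k) :
    ∀ a : Polynomial Fq, a ≠ 0 →
      Set.BijOn (fun lam : L => lam ^ p ^ ν)
        {lam : L | Ds (hat a) lam = 0} {del : L | Dt a del = 0} := by
  intro a ha
  classical
  haveI hpfact : Fact p.Prime := ⟨hp⟩
  -- characteristic facts
  have hcharFq : CharP Fq p := by
    rcases FiniteField.card Fq (ringChar Fq) with ⟨n, hprime, hcardn⟩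
    have hdvd : p ∣ ringChar Fq := by
      refine hp.dvd_of_dvd_pow (n := (n : ℕ)) ?_
      rw [← hcardn, hq]
      exact dvd_pow_self p hm.ne'
    have : ringChar Fq = p := ((Nat.prime_dvd_prime_iff_eq hp hprime).mp hdvd).symm
    exact this ▸ ringChar.charP Fq
  haveI := hcharFq
  haveI hcharL : CharP L p := charP_of_injective_algebraMap (algebraMap Fq L).injective p
  have hqL : ((Fintype.card Fq : ℕ) : L) = 0 := by
    rw [hq, Nat.cast_pow, CharP.cast_eq_zero L p, zero_pow hm.ne']
  have hq2 : 2 ≤ Fintype.card Fq := by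
    rw [hq]
    exact Nat.one_lt_pow hm.ne' hp.one_lt
  -- the inverse-Frobenius description of `hat`
  set fr := iterateFrobenius Fq p ν with hfrdef
  have hfr : ∀ c : Fq, fr c = c ^ p ^ ν := fun c => rfl
  have hmapa : (hat a).map fr = a := by
    ext k
    rw [coeff_map, hfr, hhat]
  have hhat0 : hat a ≠ 0 := by
    intro h
    exact ha (by rw [← hmapa, h, Polynomial.map_zero])
  have hdega : (hat a).natDegree = a.natDegree := by
    conv_rhs => rw [← hmapa]
    rw [natDegree_map_eq_of_injective fr.injective]
  -- transcendence facts
  have hts : ∀ b : Polynomial Fq, b ≠ 0 → aeval (algebraMap K L s) b ≠ 0 := by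
    intro b hb h
    refine hb ?_
    refine transcendental_iff.mp hs b ?_
    have h2 : (IsScalarTower.toAlgHom Fq K L) (aeval s b) = 0 := by
      rw [← aeval_algHom_apply (IsScalarTower.toAlgHom Fq K L) s b]
      exact h
    exact (_root_.map_eq_zero _).mp h2
  have htt : ∀ b : Polynomial Fq, b ≠ 0 → aeval (algebraMap K L (s ^ p ^ ν)) b ≠ 0 := by
    intro b hb h
    refine hb ?_
    refine transcendental_iff.mp (hs.pow (n := p ^ ν) (pow_pos hp.pos ν)) b ?_
    have h2 : (IsScalarTower.toAlgHom Fq K L) (aeval (s ^ p ^ ν) b) = 0 := by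
      rw [← aeval_algHom_apply (IsScalarTower.toAlgHom Fq K L) (s ^ p ^ ν) b]
      exact h
    exact (_root_.map_eq_zero _).mp h2
  -- the key pointwise twisting identity
  have key : ∀ (b : Polynomial Fq) (x : L),
      (Ds b x) ^ p ^ ν = Dt (b.map fr) (x ^ p ^ ν) := by
    intro b
    induction b using Polynomial.induction_on with
    | C c =>
        intro x
        have h1 : Ds (C c) = algebraMap Fq (Module.End Fq L) c := by
          rw [← Polynomial.algebraMap_eq]
          exact Ds.commutes c
        have h2 : Dt (C (fr c)) = algebraMap Fq (Module.End Fq L) (fr c) := by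
          rw [← Polynomial.algebraMap_eq]
          exact Dt.commutes (fr c)
        rw [map_C, h1, h2, Module.algebraMap_end_apply, Module.algebraMap_end_apply,
          _root_.smul_pow, hfr]
    | add f g hf hg =>
        intro x
        rw [map_add, LinearMap.add_apply, add_pow_char_pow, hf, hg, Polynomial.map_add,
          map_add, LinearMap.add_apply]
    | monomial n c ih =>
        intro x
        have hsplit : (C c * X ^ (n + 1) : Polynomial Fq) = C c * X ^ n * X := by ring
        have hDsx : (Ds X x) ^ p ^ ν = Dt X (x ^ p ^ ν) := by
          rw [hDs, hDt, add_pow_char_pow, mul_pow, ← map_pow, pow_right_comm]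
        rw [hsplit, map_mul, Module.End.mul_apply, ih (Ds X x), hDsx]
        simp only [Polynomial.map_mul, Polynomial.map_X, Polynomial.map_pow, map_mul,
          Module.End.mul_apply]
  -- the two kernels as finsets
  obtain ⟨SA, hSA, hSAcard⟩ := ker_finset hq2 hqL (algebraMap K L s) hhat0
    (hts _ hhat0) Ds hDs
  obtain ⟨SB, hSB, hSBcard⟩ := ker_finset hq2 hqL (algebraMap K L (s ^ p ^ ν)) ha
    (htt a ha) Dt hDt
  have hcardeq : SA.card = SB.card := by
    rw [hSAcard, hSBcard, hdega]
  -- maps to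
  have hmaps : Set.MapsTo (fun lam : L => lam ^ p ^ ν)
      {lam : L | Ds (hat a) lam = 0} {del : L | Dt a del = 0} := by
    intro x hx
    simp only [Set.mem_setOf_eq] at hx ⊢
    show Dt a (x ^ p ^ ν) = 0
    rw [← hmapa, ← key, hx, zero_pow (pow_ne_zero ν hp.ne_zero)]
  -- injectivity
  have hinj : Function.Injective (fun lam : L => lam ^ p ^ ν) := by
    intro x y hxy
    have hxy' : x ^ p ^ ν = y ^ p ^ ν := hxy
    have h : (x - y) ^ p ^ ν = 0 := by
      rw [sub_pow_char_pow, hxy', sub_self]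
    exact sub_eq_zero.mp ((pow_eq_zero_iff (pow_ne_zero ν hp.ne_zero)).mp h)
  have hinjOn : Set.InjOn (fun lam : L => lam ^ p ^ ν) {lam : L | Ds (hat a) lam = 0} :=
    hinj.injOn
  -- surjectivity via counting
  refine ⟨hmaps, hinjOn, ?_⟩
  have hsub : SA.image (fun lam : L => lam ^ p ^ ν) ⊆ SB := by
    intro y hy
    rcases Finset.mem_image.mp hy with ⟨x, hx, hfx⟩
    have hx' : x ∈ ({lam : L | Ds (hat a) lam = 0} : Set L) := by rw [← hSA]; exact_mod_cast hx
    have h3 := hmaps hx'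
    rw [← hSB] at h3
    rw [← hfx]
    exact_mod_cast h3
  have hcardim : (SA.image (fun lam : L => lam ^ p ^ ν)).card = SA.card :=
    Finset.card_image_of_injective _ hinj
  have heq : SA.image (fun lam : L => lam ^ p ^ ν) = SB :=
    Finset.eq_of_subset_of_card_le hsub (by rw [hcardim, hcardeq])
  intro y hy
  rw [← hSB, ← heq] at hy
  rcases Finset.mem_image.mp (by exact_mod_cast hy) with ⟨x, hx, hfx⟩
  have hx' : x ∈ ({lam : L | Ds (hat a) lam = 0} : Set L) := by rw [← hSA]; exact_mod_cast hx
  exact ⟨x, hx', hfx⟩
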